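/- For every nonnegative integer N and every real α ≥ 0, |e^{-α} − (-1)^N ∂_α^N [1/(1+e^α)]| ≤ C_N e^{-2α} for some constant C_N depending only on N. Equivalently, e^{-α} = (-1)^N ∂_α^N[1/(1+e^α)] + O(e^{-2α}) uniformly in α ≥ 0. -/

import Mathlib

noncomputable def fAux : ℝ → ℝ := fun β => 1 / (1 + Real.exp β)

lemma one_add_exp_pos (β : ℝ) : 0 < 1 + Real.exp β := by positivity

lemma fAux_hasDerivAt (β : ℝ) : HasDerivAt fAux ((fAux β)^2 - fAux β) β := by
  have h : HasDerivAt (fun β : ℝ => 1 + Real.exp β) (Real.exp β) β :=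
    (Real.hasDerivAt_exp β).const_add 1
  have h2 : HasDerivAt (fun β => (1 + Real.exp β)⁻¹) (-(Real.exp β) / (1 + Real.exp β)^2) β := h.inv (ne_of_gt (one_add_exp_pos β))
  have heq : fAux = fun β => (1 + Real.exp β)⁻¹ := by
    funext x; simp [fAux, one_div]
  rw [heq]
  convert h2 using 1
  have hne := ne_of_gt (one_add_exp_pos β)
  field_simp [fAux]
  ring

lemma iter_form (N : ℕ) : ∃ Q : Polynomial ℝ, ∀ α : ℝ,
    iteratedDeriv N fAux α = (-1)^N * fAux α + (fAux α)^2 * Q.eval (fAux α) := by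
  induction N with
  | zero => exact ⟨0, fun α => by simp [iteratedDeriv_zero]⟩
  | succ n ih =>
    obtain ⟨Q, hQ⟩ := ih
    refine ⟨Polynomial.C ((-1)^n) +
      (Polynomial.X - 1) * (Polynomial.C 2 * Q + Polynomial.X * Polynomial.derivative Q), fun α => ?_⟩
    rw [iteratedDeriv_succ]
    have hfun : iteratedDeriv n fAux
        = fun β => (-1)^n * fAux β + (fAux β)^2 * Q.eval (fAux β) := funext hQ
    rw [hfun]
    have hf := fAux_hasDerivAt α
    have hcomp : HasDerivAt (fun β => Q.eval (fAux β))
        ((Polynomial.derivative Q).eval (fAux α) * ((fAux α)^2 - fAux α)) α :=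
      (Q.hasDerivAt (fAux α)).comp α hf
    have hd : HasDerivAt (fun β => (-1:ℝ)^n * fAux β + (fAux β)^2 * Q.eval (fAux β))
        ((-1:ℝ)^n * ((fAux α)^2 - fAux α)
          + ((2 * fAux α ^ 1 * ((fAux α)^2 - fAux α)) * Q.eval (fAux α)
            + (fAux α)^2 * ((Polynomial.derivative Q).eval (fAux α) * ((fAux α)^2 - fAux α)))) α := by
      exact (hf.const_mul ((-1:ℝ)^n)).add ((hf.pow 2).mul hcomp)
    rw [hd.deriv]
    simp only [Polynomial.eval_add, Polynomial.eval_mul, Polynomial.eval_sub, Polynomial.eval_C,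
      Polynomial.eval_X, Polynomial.eval_one, Polynomial.eval_ofNat, Polynomial.eval_smul, smul_eq_mul, nsmul_eq_mul]
    ring

theorem exp_neg_approx_iteratedDeriv (N : ℕ) :
    ∃ C : ℝ, ∀ α : ℝ, 0 ≤ α →
      |Real.exp (-α) -
          (-1 : ℝ) ^ N * iteratedDeriv N (fun β : ℝ => 1 / (1 + Real.exp β)) α|
        ≤ C * Real.exp (-2 * α) := by
  obtain ⟨Q, hQ⟩ := iter_form N
  obtain ⟨C, hC⟩ : ∃ C, ∀ y ∈ Set.Icc (0:ℝ) 1, |Q.eval y| ≤ C := by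
    obtain ⟨C, hC⟩ := (isCompact_Icc (a := (0:ℝ)) (b := 1)).exists_bound_of_continuousOn
      (Polynomial.continuous Q).continuousOn
    exact ⟨C, fun y hy => by simpa [Real.norm_eq_abs] using hC y hy⟩
  refine ⟨1 + C, fun α hα => ?_⟩
  set y := fAux α with hydef
  have hy0 : 0 < y := by rw [hydef]; simp only [fAux]; positivity
  have hyexp : y ≤ Real.exp (-α) := by
    rw [hydef, Real.exp_neg]
    simp only [fAux]
    rw [one_div, inv_le_inv₀ (one_add_exp_pos α) (Real.exp_pos α)]
    linarith
  have hy1 : y ≤ 1 := le_trans hyexp (Real.exp_le_one_iff.mpr (by linarith))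
  have hexp2 : Real.exp (-2*α) = Real.exp (-α) * Real.exp (-α) := by
    rw [← Real.exp_add]; ring_nf
  have hdiff : Real.exp (-α) - y ≤ Real.exp (-2*α) := by
    have h1 : Real.exp (-α) - y = Real.exp (-α) / (1 + Real.exp α) := by
      rw [hydef]; simp only [fAux]
      rw [Real.exp_neg]
      have hne := ne_of_gt (one_add_exp_pos α)
      have hne2 := (Real.exp_pos α).ne'
      field_simp
      ring
    rw [h1, hexp2, div_le_iff₀ (one_add_exp_pos α)]
    have h3 : Real.exp (-α) * Real.exp α = 1 := by rw [← Real.exp_add]; simp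
    nlinarith [Real.exp_pos (-α), Real.exp_pos α]
  have hC0 : 0 ≤ C := le_trans (abs_nonneg _) (hC 0 ⟨le_refl 0, zero_le_one⟩)
  have key := hQ α
  have hfeq : (fun β : ℝ => 1 / (1 + Real.exp β)) = fAux := rfl
  rw [hfeq, key, ← hydef]
  have hpow : (-1:ℝ)^N * ((-1:ℝ)^N * y + y^2 * Q.eval y)
      = y + (-1:ℝ)^N * (y^2 * Q.eval y) := by
    have h : (-1:ℝ)^N * (-1:ℝ)^N = 1 := by rw [← mul_pow]; norm_num
    nlinarith [h]
  rw [hpow]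
  have habs : |Real.exp (-α) - (y + (-1:ℝ)^N * (y^2 * Q.eval y))|
      ≤ |Real.exp (-α) - y| + |y^2 * Q.eval y| := by
    have := abs_sub (Real.exp (-α) - y) ((-1:ℝ)^N * (y^2 * Q.eval y))
    calc |Real.exp (-α) - (y + (-1:ℝ)^N * (y^2 * Q.eval y))|
        = |(Real.exp (-α) - y) - (-1:ℝ)^N * (y^2 * Q.eval y)| := by ring_nf
      _ ≤ |Real.exp (-α) - y| + |(-1:ℝ)^N * (y^2 * Q.eval y)| := abs_sub _ _
      _ = |Real.exp (-α) - y| + |y^2 * Q.eval y| := by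
          rw [abs_mul, abs_pow, abs_neg, abs_one, one_pow, one_mul]
  have hb1 : |Real.exp (-α) - y| ≤ Real.exp (-2*α) := by
    rw [abs_of_nonneg (by linarith)]; exact hdiff
  have hb2 : |y^2 * Q.eval y| ≤ C * Real.exp (-2*α) := by
    rw [abs_mul, abs_of_nonneg (sq_nonneg y)]
    have hy2 : y^2 ≤ Real.exp (-2*α) := by
      rw [hexp2]
      nlinarith
    have hQy := hC y ⟨hy0.le, hy1⟩
    calc y^2 * |Q.eval y| ≤ Real.exp (-2*α) * C := by
          apply mul_le_mul hy2 hQy (abs_nonneg _) (Real.exp_pos _).le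
      _ = C * Real.exp (-2*α) := by ring
  calc |Real.exp (-α) - (y + (-1:ℝ)^N * (y^2 * Q.eval y))|
      ≤ |Real.exp (-α) - y| + |y^2 * Q.eval y| := habs
    _ ≤ Real.exp (-2*α) + C * Real.exp (-2*α) := add_le_add hb1 hb2
    _ = (1 + C) * Real.exp (-2*α) := by ring
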